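/- Let |ψ⟩ ∈ H = H_1 ⊗ … ⊗ H_N be a unit vector that factorizes as |ψ⟩ = |ψ_A⟩ ⊗ |ψ_B⟩ across a bipartition {1,…,N} = A ∪ B (A, B disjoint and nonempty), and let i, j, j' be pairwise distinct indices with j ∈ A and j' ∈ B. Then for ρ = |ψ⟩⟨ψ| one has |⟨φ_{i,j}|ρ|φ_{i,j'}⟩| = sqrt( ⟨φ_i|ρ|φ_i⟩ · ⟨φ_{i,j,j'}|ρ|φ_{i,j,j'}⟩ ). -/

import Mathlib

open scoped BigOperators ComplexOrder

noncomputable section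

namespace Sep

variable {N : ℕ} {d : Fin N → ℕ}

/-- The configuration (computational-basis index) of the product basis state with
local state `|1⟩` in the factors indexed by `S` and `|0⟩` in all other factors. -/
def basisCfg (hd : ∀ i, 2 ≤ d i) (S : Finset (Fin N)) : (i : Fin N) → Fin (d i) :=
  fun i => if i ∈ S then ⟨1, by have := hd i; omega⟩ else ⟨0, by have := hd i; omega⟩

/-- The outer product `|ψ⟩⟨ψ|` as a matrix in the computational basis. -/
def outer (ψ : ((i : Fin N) → Fin (d i)) → ℂ) :
    Matrix ((i : Fin N) → Fin (d i)) ((i : Fin N) → Fin (d i)) ℂ :=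
  Matrix.vecMulVec ψ (star ψ)

/-- `⟨a| ⊗ ⟨b| Π_j (ρ ⊗ ρ) Π_j |a⟩ ⊗ |b⟩`, where `Π_j` is the unitary on `H ⊗ H`
swapping the two copies of the `j`-th factor.  Since `Π_j |a⟩ ⊗ |b⟩` is the
basis vector indexed by the pair of configurations obtained from `(a, b)` by
exchanging the `j`-th coordinates, this equals the corresponding diagonal
entry of `ρ ⊗ ρ`. -/
def swapQuad (ρ : Matrix ((i : Fin N) → Fin (d i)) ((i : Fin N) → Fin (d i)) ℂ)
    (j : Fin N) (a b : (i : Fin N) → Fin (d i)) : ℂ :=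
  ρ (Function.update a j (b j)) (Function.update a j (b j)) *
    ρ (Function.update b j (a j)) (Function.update b j (a j))

/-- A pure state (state vector) is `k`-separable if `{1,…,N}` can be partitioned into
`k` (pairwise disjoint, nonempty) parts — given by the fibers of a surjection
`P : Fin N → Fin k` — such that `ψ` factorizes as a product of `k` functions, the
`l`-th of which depends only on the coordinates in part `l`. -/
def kSepPure (k : ℕ) (ψ : ((i : Fin N) → Fin (d i)) → ℂ) : Prop :=
  ∃ P : Fin N → Fin k, Function.Surjective P ∧
    ∃ f : Fin k → (((i : Fin N) → Fin (d i)) → ℂ),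
      (∀ l x y, (∀ i, P i = l → x i = y i) → f l x = f l y) ∧
      ∀ x, ψ x = ∏ l, f l x

/-- A density matrix: positive semidefinite with trace 1. -/
def IsDensityMatrix
    (ρ : Matrix ((i : Fin N) → Fin (d i)) ((i : Fin N) → Fin (d i)) ℂ) : Prop :=
  ρ.PosSemidef ∧ ρ.trace = 1

/-- A mixed state is `k`-separable if it is a convex combination of projectors onto
`k`-separable pure (unit) states, possibly separable w.r.t. different partitions. -/
def kSep (k : ℕ)
    (ρ : Matrix ((i : Fin N) → Fin (d i)) ((i : Fin N) → Fin (d i)) ℂ) : Prop :=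
  ∃ (n : ℕ) (p : Fin n → ℝ) (ψ : Fin n → ((i : Fin N) → Fin (d i)) → ℂ),
    (∀ s, 0 ≤ p s) ∧ (∑ s, p s = 1) ∧
    (∀ s, ∑ x, Complex.normSq (ψ s x) = 1) ∧
    (∀ s, kSepPure k (ψ s)) ∧
    ρ = ∑ s, (p s : ℂ) • outer (ψ s)

end Sep

open Sep in
/-- If the unit vector `ψ` factorizes across a bipartition `A | Aᶜ` of `{1,…,N}`
(both parts nonempty), and `i, j, j'` are pairwise distinct with `j ∈ A` and
`j' ∈ Aᶜ`, then for `ρ = |ψ⟩⟨ψ|` one has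
`|⟨φ_{i,j}|ρ|φ_{i,j'}⟩| = sqrt(⟨φ_i|ρ|φ_i⟩ ⟨φ_{i,j,j'}|ρ|φ_{i,j,j'}⟩)`. -/
theorem abs_offdiag_eq_sqrt_of_bipartite_product
    {N : ℕ} {d : Fin N → ℕ} (hd : ∀ i, 2 ≤ d i)
    (ψ : ((i : Fin N) → Fin (d i)) → ℂ)
    (hunit : ∑ x, Complex.normSq (ψ x) = 1)
    (A : Finset (Fin N)) (hA : A.Nonempty) (hAc : Aᶜ.Nonempty)
    (fA fB : ((i : Fin N) → Fin (d i)) → ℂ)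
    (hfA : ∀ x y, (∀ i ∈ A, x i = y i) → fA x = fA y)
    (hfB : ∀ x y, (∀ i ∉ A, x i = y i) → fB x = fB y)
    (hψ : ∀ x, ψ x = fA x * fB x)
    (i j j' : Fin N) (hij : i ≠ j) (hij' : i ≠ j') (hjj' : j ≠ j')
    (hjA : j ∈ A) (hj'B : j' ∉ A) :
    ‖(outer ψ) (basisCfg hd {i, j}) (basisCfg hd {i, j'})‖ =
      Real.sqrt (((outer ψ) (basisCfg hd {i}) (basisCfg hd {i})).re *
        ((outer ψ) (basisCfg hd {i, j, j'}) (basisCfg hd {i, j, j'})).re) := by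
  have h1 : fA (basisCfg hd {i, j}) = fA (basisCfg hd {i, j, j'}) := by
    apply hfA; intro k hk
    have hk' : k ≠ j' := fun h => hj'B (h ▸ hk)
    simp [basisCfg, hk']
  have h2 : fB (basisCfg hd {i, j}) = fB (basisCfg hd {i}) := by
    apply hfB; intro k hk
    have hk' : k ≠ j := fun h => hk (h ▸ hjA)
    simp [basisCfg, hk']
  have h3 : fA (basisCfg hd {i, j'}) = fA (basisCfg hd {i}) := by
    apply hfA; intro k hk
    have hk' : k ≠ j' := fun h => hj'B (h ▸ hk)
    simp [basisCfg, hk']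
  have h4 : fB (basisCfg hd {i, j'}) = fB (basisCfg hd {i, j, j'}) := by
    apply hfB; intro k hk
    have hk' : k ≠ j := fun h => hk (h ▸ hjA)
    simp [basisCfg, hk']
  have key : ψ (basisCfg hd {i, j}) * ψ (basisCfg hd {i, j'})
      = ψ (basisCfg hd {i}) * ψ (basisCfg hd {i, j, j'}) := by
    rw [hψ, hψ, hψ, hψ, h1, h2, h3, h4]; ring
  have habs : ‖ψ (basisCfg hd {i, j})‖ * ‖ψ (basisCfg hd {i, j'})‖
      = ‖ψ (basisCfg hd {i})‖ * ‖ψ (basisCfg hd {i, j, j'})‖ := by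
    have := congrArg (‖·‖) key
    simpa [map_mul] using this
  simp only [outer, Matrix.vecMulVec_apply, Pi.star_apply, RCLike.star_def,
    Complex.mul_conj, Complex.ofReal_re]
  rw [norm_mul, Complex.norm_conj, habs, ← Complex.sq_norm, ← Complex.sq_norm,
    ← mul_pow, Real.sqrt_sq (by positivity)]
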